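/- Let d1, d2, K, β be positive real numbers with β < β0 = 8(d1+d2)/K. Then the only pair (f,m) of nonnegative real numbers satisfying the steady-state system (β/2)·f·m·(1-(f+m)/K) = d1·f and (β/2)·f·m·(1-(f+m)/K) = d2·m is (f,m) = (0,0). -/

import Mathlib

/-- If `0 < β < β₀ = 8(d₁+d₂)/K`, the only nonnegative solution of the
steady-state system `(β/2)·f·m·(1-(f+m)/K) = d₁·f`, `(β/2)·f·m·(1-(f+m)/K) = d₂·m`
is `(f, m) = (0, 0)`. -/
theorem stmt0 (d1 d2 K β : ℝ) (hd1 : 0 < d1) (hd2 : 0 < d2) (hK : 0 < K) (hβ : 0 < β)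
    (hβ0 : β < 8 * (d1 + d2) / K) (f m : ℝ) (hf : 0 ≤ f) (hm : 0 ≤ m)
    (h1 : β / 2 * f * m * (1 - (f + m) / K) = d1 * f)
    (h2 : β / 2 * f * m * (1 - (f + m) / K) = d2 * m) :
    f = 0 ∧ m = 0 := by
  have hK' : K ≠ 0 := ne_of_gt hK
  rcases eq_or_lt_of_le hf with hf0 | hf0
  · refine ⟨hf0.symm, ?_⟩
    rw [← hf0] at h2
    simp at h2
    rcases h2 with h2 | h2
    · nlinarith
    · exact h2
  rcases eq_or_lt_of_le hm with hm0 | hm0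
  · refine ⟨?_, hm0.symm⟩
    rw [← hm0] at h1
    simp at h1
    rcases h1 with h1 | h1
    · nlinarith
    · exact h1
  exfalso
  rw [lt_div_iff₀ hK] at hβ0
  field_simp at h1 h2
  have e1 : β * m * (K - (f + m)) = 2 * (d1 * K) := by
    have h : f * (β * m * (K - (f + m))) = f * (2 * (d1 * K)) := by linear_combination f * h1
    exact mul_left_cancel₀ hf0.ne' h
  have e2 : β * f * (K - (f + m)) = 2 * (d2 * K) := by
    have h : m * (β * f * (K - (f + m))) = m * (2 * (d2 * K)) := by linear_combination m * h2
    exact mul_left_cancel₀ hm0.ne' h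
  have hsum : β * (f + m) * (K - (f + m)) = 2 * ((d1 + d2) * K) := by linear_combination e1 + e2
  nlinarith [mul_nonneg hβ.le (sq_nonneg (2*(f+m) - K)), mul_lt_mul_of_pos_right hβ0 hK]
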